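/- Let Φ(z) = αz + β + ∫_ℝ (1/(t−z) − t/(1+t²)) ν(t) dt with α ≥ 0, β ∈ ℝ, and ν non-negative non-decreasing on ℝ with ∫₁^∞ ν(t)/t² dt < ∞. Then for z in the upper half-plane, Φ(z) = αz + β + iπν(−∞) + ∫_ℝ log(√(1+t²)/(t−z)) dν(t), where the principal branch of the logarithm is taken and the last integral converges absolutely. -/

import Mathlib

open MeasureTheory Complex Filter Set Topology

namespace Stmt13

noncomputable def f (z : ℂ) (s : ℝ) : ℂ := 1 / ((s:ℂ) - z) - (s:ℂ) / (1 + (s:ℂ)^2)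

noncomputable def G (z : ℂ) (t : ℝ) : ℂ :=
  (Real.log (Real.sqrt (1 + t^2)) : ℂ) - Complex.log ((t:ℂ) - z)

variable {z : ℂ}

lemma sub_ne (hz : 0 < z.im) (t : ℝ) : (t:ℂ) - z ≠ 0 := by
  intro h
  have : ((t:ℂ) - z).im = 0 := by rw [h]; simp
  simp only [Complex.sub_im, Complex.ofReal_im, zero_sub, neg_eq_zero] at this
  exact hz.ne' this

lemma one_add_sq_eq (t : ℝ) : (1 : ℂ) + (t:ℂ)^2 = ((1 + t^2 : ℝ) : ℂ) := by push_cast; ring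

lemma one_add_sq_ne (t : ℝ) : (1 : ℂ) + (t:ℂ)^2 ≠ 0 := by
  rw [one_add_sq_eq]
  exact_mod_cast (by positivity : (1 + t^2:ℝ) ≠ 0)

lemma arg_ne (hz : 0 < z.im) (t : ℝ) : ((t:ℂ) - z).arg ≠ Real.pi := by
  have him : ((t:ℂ) - z).im < 0 := by
    simp only [Complex.sub_im, Complex.ofReal_im, zero_sub]; linarith
  have := Complex.arg_neg_iff.mpr him
  linarith [Real.pi_pos]

lemma G_eq (hz : 0 < z.im) (t : ℝ) :
    Complex.log ((Real.sqrt (1 + t ^ 2) : ℂ) / ((t : ℂ) - z)) = G z t := by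
  have hpos : 0 < Real.sqrt (1 + t ^ 2) := Real.sqrt_pos.mpr (by positivity)
  rw [div_eq_mul_inv, Complex.log_ofReal_mul hpos (inv_ne_zero (sub_ne hz t)),
    Complex.log_inv _ (arg_ne hz t), G]
  ring

lemma hasDerivAt_G (hz : 0 < z.im) (t : ℝ) : HasDerivAt (G z) (-(f z t)) t := by
  have h1r : HasDerivAt (fun t : ℝ => Real.log (Real.sqrt (1 + t^2))) (t / (1 + t^2)) t := by
    have heq : (fun t : ℝ => Real.log (Real.sqrt (1 + t^2)))
        = fun t : ℝ => Real.log (1 + t^2) / 2 := by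
      funext s; rw [Real.log_sqrt (by positivity)]
    rw [heq]
    have hinner : HasDerivAt (fun t : ℝ => 1 + t^2) (2 * t) t := by
      simpa using ((hasDerivAt_pow 2 t).const_add 1)
    have := (Real.hasDerivAt_log (by positivity : (1 + t^2 : ℝ) ≠ 0)).comp t hinner
    refine (this.div_const 2).congr_deriv ?_
    ring
  have h1 : HasDerivAt (fun t : ℝ => ((Real.log (Real.sqrt (1 + t^2)) : ℝ) : ℂ))
      ((t : ℂ) / (1 + (t:ℂ)^2)) t := by
    have := h1r.ofReal_comp
    convert this using 1
    rw [one_add_sq_eq]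
    push_cast
    ring
  have h2 : HasDerivAt (fun t : ℝ => Complex.log ((t:ℂ) - z)) (1 / ((t:ℂ) - z)) t := by
    have hmem : (t:ℂ) - z ∈ Complex.slitPlane := by
      rw [Complex.mem_slitPlane_iff]
      right
      simp only [Complex.sub_im, Complex.ofReal_im, zero_sub, ne_eq, neg_eq_zero]
      exact hz.ne'
    have houter : HasDerivAt (fun w : ℂ => Complex.log (w - z)) (((t:ℂ) - z)⁻¹) (t:ℂ) := by
      simpa [Function.comp_def] using (Complex.hasDerivAt_log hmem).comp (t:ℂ) ((hasDerivAt_id ((t:ℂ))).sub_const z)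
    simpa [one_div] using houter.comp_ofReal
  have := h1.sub h2
  refine this.congr_deriv ?_
  rw [f]
  ring
lemma f_eq (hz : 0 < z.im) (s : ℝ) :
    f z s = (1 + (s:ℂ)*z) / (((s:ℂ) - z) * (1 + (s:ℂ)^2)) := by
  rw [f]
  field_simp [sub_ne hz s, one_add_sq_ne s]
  ring

lemma im_le_norm (hz : 0 < z.im) (s : ℝ) : z.im ≤ ‖(s:ℂ) - z‖ := by
  have := Complex.abs_im_le_norm ((s:ℂ) - z)
  simp only [Complex.sub_im, Complex.ofReal_im, zero_sub, abs_neg] at this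
  exact (le_abs_self z.im).trans this

noncomputable def K (z : ℂ) : ℝ := (1 + ‖z‖ ^ 2) / z.im + ‖z‖

lemma norm_f_le (hz : 0 < z.im) (s : ℝ) : ‖f z s‖ ≤ K z / (1 + s^2) := by
  have habs : (0:ℝ) < ‖(s:ℂ) - z‖ := lt_of_lt_of_le hz (im_le_norm hz s)
  have hnum : ‖1 + (s:ℂ)*z‖ ≤ K z * ‖(s:ℂ) - z‖ := by
    have h1 : ‖1 + (s:ℂ)*z‖ ≤ 1 + |s| * ‖z‖ := by
      calc ‖1 + (s:ℂ)*z‖ ≤ ‖1‖ + ‖(s:ℂ)*z‖ :=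
            norm_add_le _ _
        _ = 1 + |s| * ‖z‖ := by simp
    have h2 : |s| ≤ ‖(s:ℂ) - z‖ + ‖z‖ := by
      calc |s| = ‖(s:ℂ)‖ := by simp
        _ = ‖((s:ℂ) - z) + z‖ := by ring_nf
        _ ≤ _ := norm_add_le _ _
    have h3 : (1:ℝ) + |s| * ‖z‖ ≤
        (1 + ‖z‖ ^ 2) + ‖z‖ * ‖(s:ℂ) - z‖ := by
      nlinarith [norm_nonneg z, abs_nonneg s]
    have h4 : (1 + ‖z‖ ^ 2) ≤ (1 + ‖z‖ ^ 2) / z.im * ‖(s:ℂ) - z‖ := by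
      rw [div_mul_eq_mul_div, le_div_iff₀ hz]
      have hle := im_le_norm hz s
      nlinarith [norm_nonneg z]
    calc ‖1 + (s:ℂ)*z‖ ≤ 1 + |s| * ‖z‖ := h1
      _ ≤ (1 + ‖z‖ ^ 2) + ‖z‖ * ‖(s:ℂ) - z‖ := h3
      _ ≤ (1 + ‖z‖ ^ 2) / z.im * ‖(s:ℂ) - z‖
          + ‖z‖ * ‖(s:ℂ) - z‖ := by linarith
      _ = K z * ‖(s:ℂ) - z‖ := by rw [K]; ring
  have hden : ‖((s:ℂ) - z) * (1 + (s:ℂ)^2)‖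
      = ‖(s:ℂ) - z‖ * (1 + s^2) := by
    rw [norm_mul, one_add_sq_eq, Complex.norm_real, Real.norm_eq_abs, abs_of_pos (by positivity : (0:ℝ) < 1 + s^2)]
  rw [f_eq hz, norm_div]
  show ‖_‖ / ‖_‖ ≤ _
  rw [hden]
  rw [div_le_div_iff₀ (by positivity) (by positivity)]
  calc ‖1 + (s:ℂ)*z‖ * (1 + s^2) ≤ (K z * ‖(s:ℂ) - z‖) * (1 + s^2) := by
        apply mul_le_mul_of_nonneg_right hnum (by positivity)
    _ = K z * (‖(s:ℂ) - z‖ * (1 + s ^ 2)) := by ring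

lemma continuous_f (hz : 0 < z.im) : Continuous (f z) := by
  have hfe : f z = fun s : ℝ => 1 / ((s:ℂ) - z) - (s:ℂ) / (1 + (s:ℂ)^2) := rfl
  rw [hfe]
  exact (continuous_const.div (Complex.continuous_ofReal.sub continuous_const)
      (sub_ne hz)).sub
    (Complex.continuous_ofReal.div (continuous_const.add (Complex.continuous_ofReal.pow 2))
      one_add_sq_ne)

lemma integrable_f (hz : 0 < z.im) : Integrable (f z) := by
  have hb : Integrable (fun s : ℝ => K z / (1 + s^2)) := by
    simpa [div_eq_mul_inv] using (integrable_inv_one_add_sq).const_mul (K z)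
  exact hb.mono' (continuous_f hz).aestronglyMeasurable
    (Eventually.of_forall fun s => norm_f_le hz s)
noncomputable def w (z : ℂ) (t : ℝ) : ℂ := (Real.sqrt (1 + t^2) : ℂ) / ((t:ℂ) - z)

lemma norm_sub_tendsto (hz : 0 < z.im) {l : Filter ℝ}
    (hl : Tendsto (fun t : ℝ => |t|) l atTop) :
    Tendsto (fun t : ℝ => ‖(t:ℂ) - z‖) l atTop := by
  refine tendsto_atTop_mono (fun t => ?_) (tendsto_atTop_add_const_right _ (-‖z‖) hl)
  have h := norm_sub_norm_le ((t:ℂ)) z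
  simp only [Complex.norm_real, Real.norm_eq_abs] at h
  linarith

lemma div_sub_tendsto (hz : 0 < z.im) {l : Filter ℝ}
    (hl : Tendsto (fun t : ℝ => |t|) l atTop) :
    Tendsto (fun t : ℝ => (t:ℂ) / ((t:ℂ) - z)) l (𝓝 1) := by
  have key : ∀ t : ℝ, (t:ℂ) / ((t:ℂ) - z) = 1 + z / ((t:ℂ) - z) := by
    intro t
    field_simp [sub_ne hz t]
    ring
  simp_rw [key]
  have hzero : Tendsto (fun t : ℝ => z / ((t:ℂ) - z)) l (𝓝 0) := by
    rw [tendsto_zero_iff_norm_tendsto_zero]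
    have hnorm : (fun t : ℝ => ‖z / ((t:ℂ) - z)‖)
        = fun t : ℝ => ‖z‖ / ‖(t:ℂ) - z‖ := by
      funext t; simp [norm_div]
    rw [hnorm]
    exact Tendsto.div_atTop tendsto_const_nhds (norm_sub_tendsto hz hl)
  simpa using tendsto_const_nhds.add hzero

lemma tendsto_inv_sq {l : Filter ℝ} (hl : Tendsto (fun t : ℝ => |t|) l atTop) :
    Tendsto (fun t : ℝ => Real.sqrt (1/t^2 + 1)) l (𝓝 1) := by
  have h2 : Tendsto (fun t : ℝ => t^2) l atTop := by
    have : (fun t : ℝ => t^2) = fun t : ℝ => |t|^2 := by funext t; rw [_root_.sq_abs]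
    rw [this]
    exact (tendsto_pow_atTop (two_ne_zero)).comp hl
  have h0 : Tendsto (fun t : ℝ => 1/t^2 + 1) l (𝓝 (0 + 1)) :=
    ((tendsto_inv_atTop_zero.comp h2).congr (fun t => (one_div _).symm)).add_const 1
  rw [zero_add] at h0
  have := (Real.continuous_sqrt.tendsto 1).comp h0
  simpa [Function.comp_def] using this

lemma tendsto_w_atTop (hz : 0 < z.im) : Tendsto (w z) atTop (𝓝 1) := by
  have habs : Tendsto (fun t : ℝ => |t|) atTop atTop := tendsto_abs_atTop_atTop
  have heq : ∀ᶠ t : ℝ in atTop, (Real.sqrt (1/t^2 + 1) : ℂ) * ((t:ℂ) / ((t:ℂ) - z)) = w z t := by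
    filter_upwards [eventually_gt_atTop (0:ℝ)] with t ht
    have hs : Real.sqrt (1/t^2 + 1) = Real.sqrt (1 + t^2) / t := by
      rw [show 1/t^2 + 1 = (1 + t^2)/t^2 by field_simp,
        Real.sqrt_div (by positivity) , Real.sqrt_sq ht.le]
    rw [hs, w]
    have ht' : (t:ℂ) ≠ 0 := by exact_mod_cast ht.ne'
    push_cast
    field_simp
  have hlim : Tendsto (fun t : ℝ => (Real.sqrt (1/t^2 + 1) : ℂ) * ((t:ℂ) / ((t:ℂ) - z)))
      atTop (𝓝 (1 * 1)) := by
    apply Tendsto.mul _ (div_sub_tendsto hz habs)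
    have := (tendsto_inv_sq habs)
    have := ((Complex.continuous_ofReal.tendsto 1).comp this)
    simpa [Function.comp_def] using this
  rw [mul_one] at hlim
  exact hlim.congr' heq

lemma tendsto_w_atBot (hz : 0 < z.im) : Tendsto (w z) atBot (𝓝 (-1)) := by
  have habs : Tendsto (fun t : ℝ => |t|) atBot atTop := tendsto_abs_atBot_atTop
  have heq : ∀ᶠ t : ℝ in atBot,
      (-(Real.sqrt (1/t^2 + 1) : ℂ)) * ((t:ℂ) / ((t:ℂ) - z)) = w z t := by
    filter_upwards [eventually_lt_atBot (0:ℝ)] with t ht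
    have ht2 : (t:ℝ)^2 ≠ 0 := pow_ne_zero 2 ht.ne
    have hs : Real.sqrt (1/t^2 + 1) = Real.sqrt (1 + t^2) / (-t) := by
      rw [show 1/t^2 + 1 = (1 + t^2)/t^2 by rw [div_add_one ht2],
        Real.sqrt_div (by positivity), show (t:ℝ)^2 = (-t)^2 by ring,
        Real.sqrt_sq (by linarith)]
    rw [hs, w]
    have ht' : (t:ℂ) ≠ 0 := by exact_mod_cast ht.ne
    push_cast
    field_simp
    try ring
  have hlim : Tendsto (fun t : ℝ => (-(Real.sqrt (1/t^2 + 1) : ℂ)) * ((t:ℂ) / ((t:ℂ) - z)))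
      atBot (𝓝 ((-1) * 1)) := by
    apply Tendsto.mul _ (div_sub_tendsto hz habs)
    have := (tendsto_inv_sq habs)
    have := ((Complex.continuous_ofReal.tendsto 1).comp this).neg
    simpa using this
  rw [neg_one_mul] at hlim
  exact hlim.congr' heq

lemma w_im_pos (hz : 0 < z.im) (t : ℝ) : 0 < (w z t).im := by
  rw [w, div_eq_mul_inv]
  rw [show ((Real.sqrt (1 + t^2) : ℂ) * ((t:ℂ) - z)⁻¹).im
      = Real.sqrt (1 + t^2) * (((t:ℂ) - z)⁻¹).im from Complex.im_ofReal_mul _ _]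
  apply mul_pos (Real.sqrt_pos.mpr (by positivity))
  rw [Complex.inv_im]
  have him : ((t:ℂ) - z).im = -z.im := by simp
  rw [him, neg_neg]
  have hns : 0 < Complex.normSq ((t:ℂ) - z) := Complex.normSq_pos.mpr (sub_ne hz t)
  exact div_pos hz hns

lemma G_eq_log_w (hz : 0 < z.im) (t : ℝ) : G z t = Complex.log (w z t) :=
  (G_eq hz t).symm

lemma tendsto_G_atTop (hz : 0 < z.im) : Tendsto (G z) atTop (𝓝 0) := by
  have hcont : ContinuousAt Complex.log 1 :=
    continuousAt_clog (by simp [Complex.mem_slitPlane_iff])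
  have := (hcont.tendsto.comp (tendsto_w_atTop hz))
  rw [Complex.log_one] at this
  exact this.congr (fun t => (G_eq_log_w hz t).symm)

lemma tendsto_G_atBot (hz : 0 < z.im) : Tendsto (G z) atBot (𝓝 (Real.pi * Complex.I)) := by
  have hlog : Tendsto Complex.log (𝓝[{w : ℂ | 0 ≤ w.im}] (-1)) (𝓝 (Real.pi * Complex.I)) := by
    have h := Complex.continuousWithinAt_log_of_re_neg_of_im_zero
      (by norm_num : ((-1 : ℂ)).re < 0) (by norm_num : ((-1 : ℂ)).im = 0)
    have := h.tendsto
    rwa [Complex.log_neg_one] at this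
  have hw : Tendsto (w z) atBot (𝓝[{w : ℂ | 0 ≤ w.im}] (-1)) := by
    rw [tendsto_nhdsWithin_iff]
    exact ⟨tendsto_w_atBot hz, Eventually.of_forall fun t => (w_im_pos hz t).le⟩
  have := hlog.comp hw
  exact this.congr (fun t => (G_eq_log_w hz t).symm)
lemma integral_Ioi_f (hz : 0 < z.im) (t : ℝ) : ∫ s in Ioi t, f z s = G z t := by
  have h := integral_Ioi_of_hasDerivAt_of_tendsto' (a := t) (m := 0) (f := G z) (f' := fun s => -(f z s))
    (fun x _ => hasDerivAt_G hz x) ((integrable_f hz).neg).integrableOn (tendsto_G_atTop hz)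
  rw [integral_neg] at h
  have := neg_eq_iff_eq_neg.mp h
  rw [this]
  ring

lemma integral_f (hz : 0 < z.im) : ∫ s : ℝ, f z s = Real.pi * Complex.I := by
  have FTC : ∀ a b : ℝ, ∫ s in a..b, f z s = G z a - G z b := by
    intro a b
    have h := intervalIntegral.integral_eq_sub_of_hasDerivAt (a := a) (b := b) (f := fun s => -(G z s))
      (f' := f z) (fun x _ => by have := (hasDerivAt_G hz x).neg; rw [neg_neg] at this; exact this)
      ((integrable_f hz).intervalIntegrable)
    rw [h]; ring
  have hlim := intervalIntegral_tendsto_integral (μ := volume) (integrable_f hz)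
    (tendsto_neg_atTop_atBot) (tendsto_id (α := ℝ)) (l := atTop)
  have hlim2 : Tendsto (fun n : ℝ => ∫ s in (-n)..(n : ℝ), f z s) atTop
      (𝓝 (Real.pi * Complex.I - 0)) := by
    have : (fun n : ℝ => ∫ s in (-n)..(n : ℝ), f z s) = fun n : ℝ => G z (-n) - G z n := by
      funext n; exact FTC (-n) n
    rw [this]
    exact ((tendsto_G_atBot hz).comp tendsto_neg_atTop_atBot).sub
      ((tendsto_G_atTop hz).comp tendsto_id)
  rw [sub_zero] at hlim2
  exact tendsto_nhds_unique hlim hlim2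
section Stieltjes

variable {ν : StieltjesFunction ℝ} {c : ℝ}

lemma const_le (hc : Tendsto (fun t : ℝ => ν t) atBot (𝓝 c)) (s : ℝ) : c ≤ ν s :=
  le_of_tendsto hc (eventually_atBot.mpr ⟨s, fun t ht => ν.mono ht⟩)

lemma c_nonneg (hnonneg : ∀ t, 0 ≤ ν t) (hc : Tendsto (fun t : ℝ => ν t) atBot (𝓝 c)) :
    0 ≤ c :=
  ge_of_tendsto hc (Eventually.of_forall hnonneg)

lemma measure_Iic_nu (hc : Tendsto (fun t : ℝ => ν t) atBot (𝓝 c)) (s : ℝ) :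
    ν.measure (Iic s) = ENNReal.ofReal (ν s - c) :=
  ν.measure_Iic hc s

lemma nu_div_integrable (hnonneg : ∀ t, 0 ≤ ν t)
    (hint : IntegrableOn (fun t => ν t / t ^ 2) (Set.Ici (1:ℝ))) :
    Integrable (fun s : ℝ => ν s / (1 + s^2)) := by
  have hmeas : Measurable fun s : ℝ => ν s / (1 + s^2) :=
    ν.mono.measurable.div (measurable_const.add (measurable_id.pow_const 2))
  rw [← integrableOn_univ, ← Set.Iic_union_Ioi (a := (1:ℝ))]
  apply IntegrableOn.union
  · apply Integrable.mono' (g := fun s : ℝ => ν 1 * (1 + s^2)⁻¹)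
      ((integrable_inv_one_add_sq.const_mul (ν 1)).integrableOn)
      hmeas.aestronglyMeasurable.restrict
    refine (ae_restrict_iff' measurableSet_Iic).mpr (Eventually.of_forall fun s hs => ?_)
    have h1 : (0:ℝ) < 1 + s^2 := by positivity
    rw [Real.norm_eq_abs, _root_.abs_of_nonneg (div_nonneg (hnonneg s) h1.le)]
    rw [div_eq_mul_inv, mul_comm, mul_comm (ν 1) _]
    exact mul_le_mul_of_nonneg_left (ν.mono hs) (by positivity)
  · apply Integrable.mono' (g := fun s : ℝ => ν s / s^2)
      (hint.mono_set Set.Ioi_subset_Ici_self) hmeas.aestronglyMeasurable.restrict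
    refine (ae_restrict_iff' measurableSet_Ioi).mpr (Eventually.of_forall fun s hs => ?_)
    have hs1 : (1:ℝ) < s := hs
    have h1 : (0:ℝ) < 1 + s^2 := by positivity
    rw [Real.norm_eq_abs, _root_.abs_of_nonneg (div_nonneg (hnonneg s) h1.le)]
    exact div_le_div_of_nonneg_left (hnonneg s) (by nlinarith) (by nlinarith)

lemma integrable_f_nu (hz : 0 < z.im) (hnonneg : ∀ t, 0 ≤ ν t)
    (hint : IntegrableOn (fun t => ν t / t ^ 2) (Set.Ici (1:ℝ))) :
    Integrable (fun s : ℝ => f z s * (ν s : ℂ)) := by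
  apply Integrable.mono' ((nu_div_integrable hnonneg hint).const_mul (K z))
  · exact (continuous_f hz).aestronglyMeasurable.mul
      ((Complex.measurable_ofReal.comp ν.mono.measurable).aestronglyMeasurable)
  · refine Eventually.of_forall fun s => ?_
    rw [norm_mul, Complex.norm_real, Real.norm_eq_abs, _root_.abs_of_nonneg (hnonneg s)]
    have h1 : (0:ℝ) < 1 + s^2 := by positivity
    calc ‖f z s‖ * ν s ≤ K z / (1 + s^2) * ν s :=
          mul_le_mul_of_nonneg_right (norm_f_le hz s) (hnonneg s)
      _ = K z * (ν s / (1 + s^2)) := by ring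

end Stieltjes
section Fubini

variable {ν : StieltjesFunction ℝ} {c : ℝ}

noncomputable def F (z : ℂ) : ℝ × ℝ → ℂ :=
  ({p : ℝ × ℝ | p.1 ≤ p.2}).indicator (fun p => f z p.2)

lemma F_section_t (z : ℂ) (s : ℝ) :
    (fun t => F z (t, s)) = (Iic s).indicator (fun _ => f z s) := by
  funext t
  by_cases h : t ≤ s <;> simp [F, Set.indicator, h]

lemma F_section_s (z : ℂ) (t : ℝ) :
    (fun s => F z (t, s)) = (Ici t).indicator (fun s => f z s) := by
  funext s
  by_cases h : t ≤ s <;> simp [F, Set.indicator, h, Set.mem_Ici]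

lemma F_stronglyMeasurable (hz : 0 < z.im) : StronglyMeasurable (F z) :=
  (((continuous_f hz).comp continuous_snd).stronglyMeasurable).indicator
    (measurableSet_le measurable_fst measurable_snd)

lemma measure_Iic_lt_top (hc : Tendsto (fun t : ℝ => ν t) atBot (𝓝 c)) (s : ℝ) :
    ν.measure (Iic s) < ⊤ := by
  rw [measure_Iic_nu hc s]
  exact ENNReal.ofReal_lt_top

lemma norm_integral_section (hc : Tendsto (fun t : ℝ => ν t) atBot (𝓝 c)) (hz : 0 < z.im)
    (s : ℝ) : (∫ t, ‖F z (t, s)‖ ∂ν.measure) = (ν s - c) * ‖f z s‖ := by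
  have : (fun t => ‖F z (t, s)‖) = (Iic s).indicator (fun _ => ‖f z s‖) := by
    rw [show (fun t => ‖F z (t, s)‖) = fun t => ‖(fun t => F z (t, s)) t‖ from rfl,
      F_section_t z s]
    funext t
    exact norm_indicator_eq_indicator_norm _ _
  rw [this, integral_indicator_const _ measurableSet_Iic, measureReal_def, measure_Iic_nu hc s, smul_eq_mul,
    ENNReal.toReal_ofReal (by linarith [const_le hc s])]

lemma F_integrable (hz : 0 < z.im) (hnonneg : ∀ t, 0 ≤ ν t)
    (hint : IntegrableOn (fun t => ν t / t ^ 2) (Set.Ici (1:ℝ)))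
    (hc : Tendsto (fun t : ℝ => ν t) atBot (𝓝 c)) :
    Integrable (F z) (ν.measure.prod volume) := by
  rw [integrable_prod_iff' (F_stronglyMeasurable hz).aestronglyMeasurable]
  constructor
  · refine Eventually.of_forall fun s => ?_
    rw [F_section_t z s, integrable_indicator_iff measurableSet_Iic]
    exact integrableOn_const (measure_Iic_lt_top hc s).ne
  · have heq : (fun s => ∫ t, ‖F z (t, s)‖ ∂ν.measure) = fun s => (ν s - c) * ‖f z s‖ := by
      funext s; exact norm_integral_section hc hz s
    rw [heq]
    apply Integrable.mono' ((nu_div_integrable hnonneg hint).const_mul (K z))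
    · exact ((ν.mono.measurable.sub measurable_const).mul
        (continuous_f hz).norm.measurable).aestronglyMeasurable
    · refine Eventually.of_forall fun s => ?_
      have h0 : 0 ≤ ν s - c := by linarith [const_le hc s]
      have h1 : (0:ℝ) < 1 + s^2 := by positivity
      rw [Real.norm_eq_abs, _root_.abs_of_nonneg (mul_nonneg h0 (norm_nonneg _))]
      calc (ν s - c) * ‖f z s‖ ≤ ν s * (K z / (1 + s^2)) := by
            apply mul_le_mul (by linarith [c_nonneg hnonneg hc]) (norm_f_le hz s)
              (norm_nonneg _) (hnonneg s)
        _ = K z * (ν s / (1 + s^2)) := by ring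

lemma key_swap (hz : 0 < z.im) (hnonneg : ∀ t, 0 ≤ ν t)
    (hint : IntegrableOn (fun t => ν t / t ^ 2) (Set.Ici (1:ℝ)))
    (hc : Tendsto (fun t : ℝ => ν t) atBot (𝓝 c)) :
    ∫ t, G z t ∂ν.measure = (∫ s : ℝ, f z s * (ν s : ℂ)) - (c:ℂ) * (Real.pi * Complex.I) := by
  have hF := F_integrable hz hnonneg hint hc
  have hswap := integral_integral_swap (f := fun t s => F z (t, s)) (μ := ν.measure)
    (ν := volume) (by exact hF)
  have hL : ∀ t : ℝ, (∫ s, F z (t, s)) = G z t := by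
    intro t
    rw [F_section_s z t, integral_indicator measurableSet_Ici,
      integral_Ici_eq_integral_Ioi]
    exact integral_Ioi_f hz t
  have hR : ∀ s : ℝ, (∫ t, F z (t, s) ∂ν.measure) = ((ν s - c : ℝ) : ℂ) * f z s := by
    intro s
    rw [F_section_t z s, integral_indicator_const _ measurableSet_Iic, measureReal_def, measure_Iic_nu hc s,
      ENNReal.toReal_ofReal (by linarith [const_le hc s])]
    rw [Complex.real_smul]
  have h1 : ∫ t, G z t ∂ν.measure = ∫ s : ℝ, ((ν s - c : ℝ) : ℂ) * f z s := by
    rw [← integral_congr_ae (Eventually.of_forall hL)] at *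
    rw [hswap]
    exact integral_congr_ae (Eventually.of_forall hR)
  rw [h1]
  have hsplit : (fun s : ℝ => ((ν s - c : ℝ) : ℂ) * f z s)
      = fun s : ℝ => f z s * (ν s : ℂ) - (c:ℂ) * f z s := by
    funext s; push_cast; ring
  rw [hsplit, integral_sub (integrable_f_nu hz hnonneg hint) ((integrable_f hz).const_mul _),
    integral_const_mul, integral_f hz]

lemma G_integrable (hz : 0 < z.im) (hnonneg : ∀ t, 0 ≤ ν t)
    (hint : IntegrableOn (fun t => ν t / t ^ 2) (Set.Ici (1:ℝ)))
    (hc : Tendsto (fun t : ℝ => ν t) atBot (𝓝 c)) :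
    Integrable (G z) ν.measure := by
  have hF := F_integrable hz hnonneg hint hc
  have := hF.integral_prod_left
  apply this.congr
  refine Eventually.of_forall fun t => ?_
  show (∫ s, F z (t, s)) = G z t
  rw [F_section_s z t, integral_indicator measurableSet_Ici, integral_Ici_eq_integral_Ioi]
  exact integral_Ioi_f hz t

end Fubini
end Stmt13

open Stmt13 in
theorem stmt_13 (ν : StieltjesFunction ℝ) (hnonneg : ∀ t, 0 ≤ ν t)
    (hint : IntegrableOn (fun t => ν t / t ^ 2) (Set.Ici (1 : ℝ)))
    (α β : ℝ) (hα : 0 ≤ α)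
    (c : ℝ) (hc : Tendsto (fun t : ℝ => ν t) atBot (nhds c))
    (z : ℂ) (hz : 0 < z.im) :
    Integrable (fun t : ℝ =>
        Complex.log ((Real.sqrt (1 + t ^ 2) : ℂ) / ((t : ℂ) - z))) ν.measure ∧
    (α : ℂ) * z + (β : ℂ) +
        ∫ t : ℝ, (1 / ((t : ℂ) - z) - (t : ℂ) / (1 + (t : ℂ) ^ 2)) * (ν t : ℂ) =
      (α : ℂ) * z + (β : ℂ) + Complex.I * Real.pi * (c : ℂ) +
        ∫ t : ℝ, Complex.log ((Real.sqrt (1 + t ^ 2) : ℂ) / ((t : ℂ) - z)) ∂ν.measure := by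
  have hGint := G_integrable hz hnonneg hint hc
  have hkey := key_swap hz hnonneg hint hc
  have hfun : (fun t : ℝ => Complex.log ((Real.sqrt (1 + t ^ 2) : ℂ) / ((t : ℂ) - z)))
      = G z := by
    funext t; exact G_eq hz t
  constructor
  · rw [hfun]; exact hGint
  · rw [hfun]
    have hL : (∫ t : ℝ, (1 / ((t : ℂ) - z) - (t : ℂ) / (1 + (t : ℂ) ^ 2)) * (ν t : ℂ))
        = ∫ s : ℝ, f z s * (ν s : ℂ) := rfl
    rw [hL, hkey]
    ring
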